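/- Fix 0 < α < 1, −1 ≤ λ ≤ 1, and t > 0. Let Z1, Z2 be independent standard normal random variables and for α' with α ≤ α' ≤ 1 set X = Z1 and Y = α'·Z1 + √(1−α'²)·Z2. Then Pr[X ≥ t ∧ Y ≥ α^λ·t] ≥ e^{-Δ²/2} / (2π(1 + t/α)²), where Δ² = (1 + (α^λ − α)²/(1−α²)) · t². -/

import Mathlib

set_option maxHeartbeats 800000

open MeasureTheory ProbabilityTheory Real Filter Set

lemma exp_tail_integral (u : ℝ) (hu : 0 ≤ u) :
    Real.exp (-u^2/2) / (u+1) ≤ ∫ x in Set.Ioi u, Real.exp (-x^2/2) := by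
  set φ : ℝ → ℝ := fun x => Real.exp (-x^2/2) * ((x^2+x+1)/(x+1)^2) with hφ
  set g : ℝ → ℝ := fun x => -Real.exp (-x^2/2) / (x+1) with hg
  have hint_exp : IntegrableOn (fun x => Real.exp (-x^2/2)) (Set.Ioi u) := by
    have : (fun x : ℝ => Real.exp (-x^2/2)) = fun x : ℝ => Real.exp (-(1/2) * x^2) := by
      ext x; ring_nf
    rw [this]
    exact (integrable_exp_neg_mul_sq (by norm_num)).integrableOn
  have hφ_nonneg : ∀ x ∈ Set.Ioi u, 0 ≤ φ x := by
    intro x hx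
    have hx0 : 0 ≤ x := le_trans hu (le_of_lt hx)
    have : (0:ℝ) < (x+1)^2 := by positivity
    positivity
  have hφ_le : ∀ x ∈ Set.Ioi u, φ x ≤ Real.exp (-x^2/2) := by
    intro x hx
    have hx0 : 0 ≤ x := le_trans hu (le_of_lt hx)
    have h1 : (x^2+x+1)/(x+1)^2 ≤ 1 := by
      rw [div_le_one (by positivity)]; nlinarith
    calc φ x ≤ Real.exp (-x^2/2) * 1 :=
          mul_le_mul_of_nonneg_left h1 (Real.exp_nonneg _)
      _ = Real.exp (-x^2/2) := mul_one _
  have hφ_meas : AEStronglyMeasurable φ (volume.restrict (Set.Ioi u)) := by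
    apply Measurable.aestronglyMeasurable
    fun_prop
  have hφ_int : IntegrableOn φ (Set.Ioi u) := by
    refine MeasureTheory.Integrable.mono hint_exp hφ_meas ?_
    filter_upwards [ae_restrict_mem measurableSet_Ioi] with x hx
    rw [Real.norm_eq_abs, Real.norm_eq_abs, abs_of_nonneg (hφ_nonneg x hx),
      abs_of_nonneg (Real.exp_nonneg _)]
    exact hφ_le x hx
  have hderiv : ∀ x ∈ Set.Ici u, HasDerivAt g (φ x) x := by
    intro x hx
    have hx0 : 0 ≤ x := le_trans hu hx
    have hne : x + 1 ≠ 0 := by positivity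
    have h1 : HasDerivAt (fun y : ℝ => -y^2/2) (-x) x := by
      have := ((hasDerivAt_pow 2 x).neg).div_const 2
      simpa using this.congr_deriv (by ring)
    have h2 : HasDerivAt (fun y : ℝ => -Real.exp (-y^2/2)) (x * Real.exp (-x^2/2)) x := by
      have := (h1.exp).neg
      refine this.congr_deriv ?_
      ring
    have h3 : HasDerivAt (fun y : ℝ => y + 1) 1 x := by
      simpa using (hasDerivAt_id x).add_const 1
    have := h2.div h3 hne
    apply this.congr_deriv
    simp only [hφ]
    rw [mul_div_assoc']
    congr 1
    ring
  have htend : Tendsto g atTop (nhds 0) := by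
    have h1 : Tendsto (fun x : ℝ => -Real.exp (-x^2/2)) atTop (nhds 0) := by
      rw [show (0:ℝ) = -0 by ring]
      apply Tendsto.neg
      apply Real.tendsto_exp_atBot.comp
      have : Tendsto (fun x : ℝ => x^2) atTop atTop := by
        simpa using tendsto_pow_atTop (n := 2) (by norm_num)
      apply Tendsto.atBot_div_const (by norm_num : (0:ℝ) < 2)
      exact tendsto_neg_atBot_iff.mpr this
    have h2 : Tendsto (fun x : ℝ => x + 1) atTop atTop :=
      tendsto_atTop_add_const_right _ 1 tendsto_id
    simpa using h1.div_atTop h2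
  have hFTC : ∫ x in Set.Ioi u, φ x = 0 - g u :=
    integral_Ioi_of_hasDerivAt_of_tendsto' hderiv hφ_int htend
  have : Real.exp (-u^2/2) / (u+1) = ∫ x in Set.Ioi u, φ x := by
    rw [hFTC, hg]; ring
  rw [this]
  exact setIntegral_mono_on hφ_int hint_exp measurableSet_Ioi hφ_le

lemma gaussian_tail (u : ℝ) (hu : 0 ≤ u) :
    ENNReal.ofReal (Real.exp (-u^2/2) / (Real.sqrt (2*Real.pi) * (u+1)))
      ≤ gaussianReal 0 1 (Set.Ici u) := by
  rw [gaussianReal_apply_eq_integral 0 one_ne_zero]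
  apply ENNReal.ofReal_le_ofReal
  have hpdf : ∀ x : ℝ, gaussianPDFReal 0 1 x = (Real.sqrt (2*Real.pi))⁻¹ * Real.exp (-x^2/2) := by
    intro x
    simp [gaussianPDFReal]

  rw [MeasureTheory.integral_Ici_eq_integral_Ioi]
  calc Real.exp (-u^2/2) / (Real.sqrt (2*Real.pi) * (u+1))
      = (Real.sqrt (2*Real.pi))⁻¹ * (Real.exp (-u^2/2) / (u+1)) := by
        rw [div_mul_eq_div_div]; ring
    _ ≤ (Real.sqrt (2*Real.pi))⁻¹ * ∫ x in Set.Ioi u, Real.exp (-x^2/2) := by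
        apply mul_le_mul_of_nonneg_left (exp_tail_integral u hu)
        positivity
    _ = ∫ x in Set.Ioi u, gaussianPDFReal 0 1 x := by
        rw [← integral_const_mul]
        congr 1; ext x; rw [hpdf x]

lemma key_corner (α lam t α' : ℝ) (hα0 : 0 < α) (hα1 : α < 1)
    (hlam : lam ∈ Set.Icc (-1 : ℝ) 1) (ht : 0 < t)
    (hα'lo : α ≤ α') (hα'hi : α' ≤ 1) :
    ∃ u v : ℝ, 0 ≤ u ∧ 0 ≤ v ∧ u ≤ t/α ∧ v ≤ t/α ∧
      u^2 + v^2 ≤ (1 + (α ^ lam - α) ^ 2 / (1 - α ^ 2)) * t ^ 2 ∧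
      (Set.Ici u ×ˢ Set.Ici v ⊆
        {z : ℝ × ℝ | t ≤ z.1 ∧ α ^ lam * t ≤ α' * z.1 + Real.sqrt (1 - α' ^ 2) * z.2}) := by
  set c := α ^ lam with hc
  have hα'0 : 0 < α' := lt_of_lt_of_le hα0 hα'lo
  have hc0 : 0 < c := Real.rpow_pos_of_pos hα0 lam
  have hcα : α ≤ c := by
    have := Real.rpow_le_rpow_of_exponent_ge hα0 hα1.le hlam.2
    rwa [Real.rpow_one] at this
  have hcinv : c ≤ α⁻¹ := by
    have := Real.rpow_le_rpow_of_exponent_ge hα0 hα1.le hlam.1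
    rwa [Real.rpow_neg_one] at this
  clear_value c
  clear hc hlam
  have h1α : (0:ℝ) < 1 - α^2 := by nlinarith
  have h1α' : (0:ℝ) ≤ 1 - α'^2 := by nlinarith
  set p := Real.sqrt (1 - α^2) with hpdef
  set q := Real.sqrt (1 - α'^2) with hqdef
  have hp2 : p^2 = 1 - α^2 := Real.sq_sqrt h1α.le
  have hq2 : q^2 = 1 - α'^2 := Real.sq_sqrt h1α'
  have hp0 : 0 < p := Real.sqrt_pos.mpr h1α
  have hq0 : 0 ≤ q := Real.sqrt_nonneg _
  have hp1 : p ≤ 1 := Real.sqrt_le_one.mpr (by nlinarith)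
  have hq1 : q ≤ 1 := Real.sqrt_le_one.mpr (by nlinarith)
  clear_value p q
  clear hpdef hqdef
  have htα : 0 < t/α := by positivity
  have hαc : α * c ≤ 1 := by
    calc α * c ≤ α * α⁻¹ := by nlinarith
      _ = 1 := mul_inv_cancel₀ hα0.ne'
  set s := (c - α) * t / p with hsdef
  have hs0 : 0 ≤ s := div_nonneg (by nlinarith) hp0.le
  have hΔ : (1 + (c - α) ^ 2 / (1 - α ^ 2)) * t ^ 2 = t^2 + s^2 := by
    rw [hsdef]
    field_simp
    rw [← hp2]
    ring
  have hstα : s ≤ t/α := by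
    rw [hsdef, div_le_div_iff₀ hp0 hα0]
    have hpge : 1 - α^2 ≤ p := by nlinarith [sq_nonneg (p - 1)]
    nlinarith
  have hs2 : s^2 = (c-α)^2*t^2/(1-α^2) := by
    rw [hsdef, div_pow, hp2]; ring
  clear_value s
  by_cases hcase : 1 ≤ c * α'
  · -- u = c t α', v = c t q
    have hct : c * t ≤ α⁻¹ * t := mul_le_mul_of_nonneg_right hcinv ht.le
    have hctpos : 0 < c * t := by positivity
    have hctα' : c * t * α' ≤ c * t * 1 := mul_le_mul_of_nonneg_left hα'hi hctpos.le
    have hctq : c * t * q ≤ c * t * 1 := mul_le_mul_of_nonneg_left hq1 hctpos.le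
    refine ⟨c*t*α', c*t*q, by positivity, by positivity, ?_, ?_, ?_, ?_⟩
    · rw [div_eq_inv_mul]; linarith [mul_one (c*t)]
    · rw [div_eq_inv_mul]; linarith [mul_one (c*t)]
    · rw [hΔ]
      have h1 : (c*t*α')^2 + (c*t*q)^2 = c^2*t^2 := by
        linear_combination (c*t)^2 * hq2
      rw [h1]
      have h2 : (c^2-1)*t^2 ≤ (c-α)^2*t^2/(1-α^2) := by
        rw [le_div_iff₀ h1α]
        nlinarith [sq_nonneg ((1-c*α)*t)]
      nlinarith [h2, hs2]
    · rintro ⟨z1, z2⟩ ⟨hz1, hz2⟩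
      simp only [Set.mem_Ici] at hz1 hz2
      constructor
      · have h4 : t * 1 ≤ t * (c * α') := mul_le_mul_of_nonneg_left hcase ht.le
        have e : t * (c*α') = c*t*α' := by ring
        simp only [Set.mem_setOf_eq]
        linarith [mul_one t]
      · simp only [Set.mem_setOf_eq]
        have e2 : α'^2 + q^2 = 1 := by rw [hq2]; ring
        have h1 : α' * (c*t*α') ≤ α' * z1 := mul_le_mul_of_nonneg_left hz1 hα'0.le
        have h2 : q * (c*t*q) ≤ q * z2 := mul_le_mul_of_nonneg_left hz2 hq0
        have e3 : α' * (c*t*α') + q * (c*t*q) = c*t := by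
          linear_combination (c*t) * e2
        linarith
  · -- u = t, v = max ((c-α')t/q) 0
    push_neg at hcase
    set v := max ((c - α') * t / q) 0 with hvdef
    have hv0 : 0 ≤ v := le_max_right _ _
    have hqpos_of : α' < c → 0 < q := by
      intro hcc
      rcases lt_or_eq_of_le hq0 with h | h
      · exact h
      · exfalso
        have h0 : (1:ℝ) - α'^2 = 0 := by rw [← hq2, ← h]; ring
        have hα'1 : α' = 1 := by nlinarith
        rw [hα'1] at hcase hcc
        nlinarith
    have hvs : v ≤ s := by
      rw [hvdef, max_le_iff]
      refine ⟨?_, hs0⟩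
      by_cases hcc : c ≤ α'
      · have h0 : (c - α') * t / q ≤ 0 :=
          div_nonpos_of_nonpos_of_nonneg (by nlinarith) hq0
        linarith
      · push_neg at hcc
        have hqpos : 0 < q := hqpos_of hcc
        have hcα'1 : c * α' ≤ 1 := hcase.le
        have hsq : ((c - α') * p)^2 ≤ ((c - α) * q)^2 := by
          have E : ((c-α)*q)^2 - ((c-α')*p)^2
              = (α'-α)*((c-α)*(1-c*α') + (c-α')*(1-c*α)) := by
            rw [mul_pow, mul_pow, hp2, hq2]; ring
          nlinarith [mul_nonneg (mul_nonneg (sub_nonneg.2 hα'lo) (sub_nonneg.2 hcα))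
              (sub_nonneg.2 hcα'1), mul_nonneg (mul_nonneg (sub_nonneg.2 hα'lo)
              (sub_nonneg.2 hcc.le)) (sub_nonneg.2 hαc)]
        have hlin : (c - α') * p ≤ (c - α) * q := by
          have h1 : 0 ≤ (c - α') * p := mul_nonneg (by linarith) hp0.le
          have h2 : 0 ≤ (c - α) * q := mul_nonneg (by linarith) hq0
          have h3 := Real.sqrt_le_sqrt hsq
          rwa [Real.sqrt_sq h1, Real.sqrt_sq h2] at h3
        rw [hsdef, div_le_div_iff₀ hqpos hp0]
        linarith [mul_le_mul_of_nonneg_right hlin ht.le]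
    refine ⟨t, v, ht.le, hv0, ?_, le_trans hvs hstα, ?_, ?_⟩
    · rw [div_eq_inv_mul]
      have h5 : (1:ℝ) ≤ α⁻¹ := one_le_inv₀ hα0 |>.mpr hα1.le
      calc t = 1 * t := (one_mul t).symm
        _ ≤ α⁻¹ * t := mul_le_mul_of_nonneg_right h5 ht.le
    · rw [hΔ]; nlinarith
    · rintro ⟨z1, z2⟩ ⟨hz1, hz2⟩
      simp only [Set.mem_Ici] at hz1 hz2
      refine ⟨hz1, ?_⟩
      simp only [Set.mem_setOf_eq]
      by_cases hcc : c ≤ α'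
      · have : 0 ≤ q * z2 := mul_nonneg hq0 (le_trans hv0 hz2)
        nlinarith
      · push_neg at hcc
        have hqpos : 0 < q := hqpos_of hcc
        have hveq : v = (c - α') * t / q := by
          rw [hvdef, max_eq_left]
          exact div_nonneg (by nlinarith) hqpos.le
        have hqv : q * v = (c - α') * t := by
          have hqne : q ≠ 0 := hqpos.ne'
          rw [hveq]
          field_simp
        have h1 : α' * t ≤ α' * z1 := mul_le_mul_of_nonneg_left hz1 hα'0.le
        have h2 : q * v ≤ q * z2 := mul_le_mul_of_nonneg_left hz2 hq0
        linarith

/-- Bivariate Gaussian tail lower bound: for standard normals `X = Z1` and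
`Y = α'·Z1 + √(1-α'²)·Z2` with correlation `α' ≥ α`,
`Pr[X ≥ t ∧ Y ≥ α^λ·t] ≥ e^{-Δ²/2}/(2π(1+t/α)²)` where
`Δ² = (1 + (α^λ-α)²/(1-α²))·t²`. -/
theorem bivariate_tail_lower (α lam t α' : ℝ) (hα0 : 0 < α) (hα1 : α < 1)
    (hlam : lam ∈ Set.Icc (-1 : ℝ) 1) (ht : 0 < t)
    (hα'lo : α ≤ α') (hα'hi : α' ≤ 1) :
    ENNReal.ofReal
        (Real.exp (-((1 + (α ^ lam - α) ^ 2 / (1 - α ^ 2)) * t ^ 2) / 2) /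
          (2 * Real.pi * (1 + t / α) ^ 2))
      ≤ ((gaussianReal 0 1).prod (gaussianReal 0 1))
          {z : ℝ × ℝ | t ≤ z.1 ∧ α ^ lam * t ≤ α' * z.1 + Real.sqrt (1 - α' ^ 2) * z.2} := by
  obtain ⟨u, v, hu0, hv0, hut, hvt, hΔle, hsub⟩ :=
    key_corner α lam t α' hα0 hα1 hlam ht hα'lo hα'hi
  have hmono := measure_mono (μ := (gaussianReal 0 1).prod (gaussianReal 0 1)) hsub
  rw [MeasureTheory.Measure.prod_prod] at hmono
  refine le_trans ?_ hmono
  have h1 := gaussian_tail u hu0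
  have h2 := gaussian_tail v hv0
  have hsq2π : Real.sqrt (2*Real.pi) * Real.sqrt (2*Real.pi) = 2*Real.pi :=
    Real.mul_self_sqrt (by positivity)
  have hau0 : 0 ≤ Real.exp (-u^2/2) / (Real.sqrt (2*Real.pi) * (u+1)) := by positivity
  have e : Real.exp (-u^2/2) / (Real.sqrt (2*Real.pi) * (u+1))
        * (Real.exp (-v^2/2) / (Real.sqrt (2*Real.pi) * (v+1)))
      = Real.exp (-(u^2+v^2)/2) / (2*Real.pi*((u+1)*(v+1))) := by
    rw [div_mul_div_comm, ← Real.exp_add]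
    rw [show -u^2/2 + -v^2/2 = -(u^2+v^2)/2 by ring]
    congr 1
    rw [show Real.sqrt (2*Real.pi) * (u+1) * (Real.sqrt (2*Real.pi) * (v+1))
        = (Real.sqrt (2*Real.pi) * Real.sqrt (2*Real.pi)) * ((u+1)*(v+1)) by ring, hsq2π]
  have hreal : Real.exp (-((1 + (α ^ lam - α) ^ 2 / (1 - α ^ 2)) * t ^ 2) / 2) /
        (2 * Real.pi * (1 + t / α) ^ 2)
      ≤ Real.exp (-u^2/2) / (Real.sqrt (2*Real.pi) * (u+1))
        * (Real.exp (-v^2/2) / (Real.sqrt (2*Real.pi) * (v+1))) := by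
    rw [e]
    apply div_le_div₀ (Real.exp_nonneg _)
    · exact Real.exp_le_exp.mpr (by linarith)
    · exact mul_pos (by positivity) (mul_pos (by linarith) (by linarith))
    · have hprod : (u+1)*(v+1) ≤ (1 + t/α)^2 := by nlinarith
      have h2π : (0:ℝ) ≤ 2*Real.pi := by positivity
      nlinarith [Real.pi_pos]
  calc ENNReal.ofReal (Real.exp (-((1 + (α ^ lam - α) ^ 2 / (1 - α ^ 2)) * t ^ 2) / 2) /
        (2 * Real.pi * (1 + t / α) ^ 2))
      ≤ ENNReal.ofReal (Real.exp (-u^2/2) / (Real.sqrt (2*Real.pi) * (u+1))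
          * (Real.exp (-v^2/2) / (Real.sqrt (2*Real.pi) * (v+1)))) :=
        ENNReal.ofReal_le_ofReal hreal
    _ = ENNReal.ofReal (Real.exp (-u^2/2) / (Real.sqrt (2*Real.pi) * (u+1)))
          * ENNReal.ofReal (Real.exp (-v^2/2) / (Real.sqrt (2*Real.pi) * (v+1))) :=
        ENNReal.ofReal_mul hau0
    _ ≤ gaussianReal 0 1 (Set.Ici u) * gaussianReal 0 1 (Set.Ici v) := mul_le_mul' h1 h2
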